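/- Sequential composition with independent inputs for KL-divergence distribution privacy: if D_KL(A₀#(λ₀)‖A₀#(λ'₀)) ≤ ε₀ and for every y₀ ∈ Y₀, D_KL(A₁(y₀)#(λ₁)‖A₁(y₀)#(λ'₁)) ≤ ε₁, then the composed algorithm producing y₁ by sampling x₀ ∼ λ₀ (resp. λ'₀), y₀ ∼ A₀(x₀), x₁ ∼ λ₁ (resp. λ'₁), y₁ ∼ A₁(y₀, x₁), satisfies D_KL of the two resulting output distributions ≤ ε₀ + ε₁. -/

import Mathlib

open Finset Real

lemma mix_pos {X : Type*} [Fintype X] (l k : X → ℝ) (hl : ∀ x, 0 ≤ l x)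
    (hl1 : ∑ x, l x = 1) (hk : ∀ x, 0 < k x) : 0 < ∑ x, l x * k x := by
  have hex : ∃ x ∈ Finset.univ, 0 < l x := by
    by_contra h
    push_neg at h
    have h0 : ∑ x, l x = 0 :=
      Finset.sum_eq_zero fun x hx => le_antisymm (h x hx) (hl x)
    rw [h0] at hl1; linarith
  obtain ⟨x, hx, hpos⟩ := hex
  exact Finset.sum_pos' (fun i _ => mul_nonneg (hl i) (hk i).le)
    ⟨x, hx, mul_pos hpos (hk x)⟩

/-- Log-sum inequality. -/
lemma log_sum_ineq {ι : Type*} [Fintype ι] (a b : ι → ℝ)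
    (ha : ∀ i, 0 < a i) (hb : ∀ i, 0 < b i) :
    (∑ i, a i) * Real.log ((∑ i, a i) / (∑ i, b i)) ≤ ∑ i, a i * Real.log (a i / b i) := by
  rcases isEmpty_or_nonempty ι with h | h
  · simp
  have hA : 0 < ∑ i, a i := Finset.sum_pos (fun i _ => ha i) univ_nonempty
  have hB : 0 < ∑ i, b i := Finset.sum_pos (fun i _ => hb i) univ_nonempty
  set A := ∑ i, a i
  set B := ∑ i, b i
  have step : ∀ i, a i * Real.log (A / B) - a i * Real.log (a i / b i)
      ≤ A / B * b i - a i := by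
    intro i
    have h1 : a i ≠ 0 := (ha i).ne'
    have h2 : b i ≠ 0 := (hb i).ne'
    have h3 : B ≠ 0 := hB.ne'
    rw [← mul_sub, ← Real.log_div (div_pos hA hB).ne' (div_pos (ha i) (hb i)).ne']
    have hlog := Real.log_le_sub_one_of_pos
      (div_pos (div_pos hA hB) (div_pos (ha i) (hb i)))
    calc a i * Real.log ((A / B) / (a i / b i))
        ≤ a i * ((A / B) / (a i / b i) - 1) :=
          mul_le_mul_of_nonneg_left hlog (ha i).le
      _ = A / B * b i - a i := by
          field_simp
  have hsum := Finset.sum_le_sum (fun i (_ : i ∈ Finset.univ) => step i)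
  rw [Finset.sum_sub_distrib, Finset.sum_sub_distrib, ← Finset.sum_mul, ← Finset.mul_sum] at hsum
  have : A / B * B = A := div_mul_cancel₀ A hB.ne'
  linarith

/-- Sequential composition with independent inputs for KL-divergence
distribution privacy. -/
theorem stmt10 {X Y₀ Y₁ : Type*} [Fintype X] [Fintype Y₀] [Fintype Y₁]
    (A₀ : X → Y₀ → ℝ) (A₁ : Y₀ → X → Y₁ → ℝ)
    (hA₀ : ∀ x y, 0 < A₀ x y) (hA₀1 : ∀ x, ∑ y, A₀ x y = 1)
    (hA₁ : ∀ y₀ x y, 0 < A₁ y₀ x y) (hA₁1 : ∀ y₀ x, ∑ y, A₁ y₀ x y = 1)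
    (l₀ l'₀ l₁ l'₁ : X → ℝ)
    (hl₀ : ∀ x, 0 ≤ l₀ x) (hl₀1 : ∑ x, l₀ x = 1)
    (hl'₀ : ∀ x, 0 ≤ l'₀ x) (hl'₀1 : ∑ x, l'₀ x = 1)
    (hl₁ : ∀ x, 0 ≤ l₁ x) (hl₁1 : ∑ x, l₁ x = 1)
    (hl'₁ : ∀ x, 0 ≤ l'₁ x) (hl'₁1 : ∑ x, l'₁ x = 1)
    (ε₀ ε₁ : ℝ)
    (h0 : ∑ y₀, (∑ x, l₀ x * A₀ x y₀) *
        Real.log ((∑ x, l₀ x * A₀ x y₀) / (∑ x, l'₀ x * A₀ x y₀)) ≤ ε₀)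
    (h1 : ∀ y₀, ∑ y₁, (∑ x, l₁ x * A₁ y₀ x y₁) *
        Real.log ((∑ x, l₁ x * A₁ y₀ x y₁) / (∑ x, l'₁ x * A₁ y₀ x y₁)) ≤ ε₁) :
    ∑ y₁, (∑ y₀, (∑ x, l₀ x * A₀ x y₀) * (∑ x, l₁ x * A₁ y₀ x y₁)) *
        Real.log ((∑ y₀, (∑ x, l₀ x * A₀ x y₀) * (∑ x, l₁ x * A₁ y₀ x y₁)) /
                  (∑ y₀, (∑ x, l'₀ x * A₀ x y₀) * (∑ x, l'₁ x * A₁ y₀ x y₁)))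
      ≤ ε₀ + ε₁ := by
  -- abbreviations
  set μ : Y₀ → ℝ := fun y₀ => ∑ x, l₀ x * A₀ x y₀ with hμdef
  set μ' : Y₀ → ℝ := fun y₀ => ∑ x, l'₀ x * A₀ x y₀ with hμ'def
  set ν : Y₀ → Y₁ → ℝ := fun y₀ y₁ => ∑ x, l₁ x * A₁ y₀ x y₁ with hνdef
  set ν' : Y₀ → Y₁ → ℝ := fun y₀ y₁ => ∑ x, l'₁ x * A₁ y₀ x y₁ with hν'def
  have hμpos : ∀ y₀, 0 < μ y₀ := fun y₀ =>
    mix_pos l₀ (fun x => A₀ x y₀) hl₀ hl₀1 (fun x => hA₀ x y₀)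
  have hμ'pos : ∀ y₀, 0 < μ' y₀ := fun y₀ =>
    mix_pos l'₀ (fun x => A₀ x y₀) hl'₀ hl'₀1 (fun x => hA₀ x y₀)
  have hνpos : ∀ y₀ y₁, 0 < ν y₀ y₁ := fun y₀ y₁ =>
    mix_pos l₁ (fun x => A₁ y₀ x y₁) hl₁ hl₁1 (fun x => hA₁ y₀ x y₁)
  have hν'pos : ∀ y₀ y₁, 0 < ν' y₀ y₁ := fun y₀ y₁ =>
    mix_pos l'₁ (fun x => A₁ y₀ x y₁) hl'₁ hl'₁1 (fun x => hA₁ y₀ x y₁)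
  have hμ1 : ∑ y₀, μ y₀ = 1 := by
    rw [hμdef, Finset.sum_comm]
    simp only [← Finset.mul_sum, hA₀1, mul_one]
    exact hl₀1
  have hν1 : ∀ y₀, ∑ y₁, ν y₀ y₁ = 1 := by
    intro y₀
    rw [hνdef, Finset.sum_comm]
    simp only [← Finset.mul_sum, hA₁1, mul_one]
    exact hl₁1
  -- step 1: per-y₁ log-sum inequality
  have step1 : ∑ y₁, (∑ y₀, μ y₀ * ν y₀ y₁) *
        Real.log ((∑ y₀, μ y₀ * ν y₀ y₁) / (∑ y₀, μ' y₀ * ν' y₀ y₁))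
      ≤ ∑ y₁, ∑ y₀, (μ y₀ * ν y₀ y₁) *
        Real.log ((μ y₀ * ν y₀ y₁) / (μ' y₀ * ν' y₀ y₁)) := by
    apply Finset.sum_le_sum
    intro y₁ _
    exact log_sum_ineq (fun y₀ => μ y₀ * ν y₀ y₁) (fun y₀ => μ' y₀ * ν' y₀ y₁)
      (fun y₀ => mul_pos (hμpos y₀) (hνpos y₀ y₁))
      (fun y₀ => mul_pos (hμ'pos y₀) (hν'pos y₀ y₁))
  -- step 2: chain rule
  have step2 : ∑ y₁, ∑ y₀, (μ y₀ * ν y₀ y₁) *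
        Real.log ((μ y₀ * ν y₀ y₁) / (μ' y₀ * ν' y₀ y₁))
      = (∑ y₀, μ y₀ * Real.log (μ y₀ / μ' y₀)) +
        ∑ y₀, μ y₀ * ∑ y₁, ν y₀ y₁ * Real.log (ν y₀ y₁ / ν' y₀ y₁) := by
    rw [Finset.sum_comm, ← Finset.sum_add_distrib]
    apply Finset.sum_congr rfl
    intro y₀ _
    have : ∀ y₁ : Y₁, (μ y₀ * ν y₀ y₁) *
          Real.log ((μ y₀ * ν y₀ y₁) / (μ' y₀ * ν' y₀ y₁))
        = μ y₀ * Real.log (μ y₀ / μ' y₀) * ν y₀ y₁ +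
          μ y₀ * (ν y₀ y₁ * Real.log (ν y₀ y₁ / ν' y₀ y₁)) := by
      intro y₁
      rw [show (μ y₀ * ν y₀ y₁) / (μ' y₀ * ν' y₀ y₁)
            = (μ y₀ / μ' y₀) * (ν y₀ y₁ / ν' y₀ y₁) by
        rw [div_mul_div_comm]]
      rw [Real.log_mul (div_pos (hμpos y₀) (hμ'pos y₀)).ne'
        (div_pos (hνpos y₀ y₁) (hν'pos y₀ y₁)).ne']
      ring
    rw [Finset.sum_congr rfl (fun y₁ _ => this y₁), Finset.sum_add_distrib,
      ← Finset.mul_sum, ← Finset.mul_sum, hν1 y₀, mul_one]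
  -- step 3: bound the two pieces
  have bound2 : ∑ y₀, μ y₀ * ∑ y₁, ν y₀ y₁ * Real.log (ν y₀ y₁ / ν' y₀ y₁) ≤ ε₁ := by
    calc ∑ y₀, μ y₀ * ∑ y₁, ν y₀ y₁ * Real.log (ν y₀ y₁ / ν' y₀ y₁)
        ≤ ∑ y₀, μ y₀ * ε₁ := by
          apply Finset.sum_le_sum
          intro y₀ _
          exact mul_le_mul_of_nonneg_left (h1 y₀) (hμpos y₀).le
      _ = ε₁ := by rw [← Finset.sum_mul, hμ1, one_mul]
  calc ∑ y₁, (∑ y₀, μ y₀ * ν y₀ y₁) *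
        Real.log ((∑ y₀, μ y₀ * ν y₀ y₁) / (∑ y₀, μ' y₀ * ν' y₀ y₁))
      ≤ (∑ y₀, μ y₀ * Real.log (μ y₀ / μ' y₀)) +
        ∑ y₀, μ y₀ * ∑ y₁, ν y₀ y₁ * Real.log (ν y₀ y₁ / ν' y₀ y₁) :=
        step2 ▸ step1
    _ ≤ ε₀ + ε₁ := add_le_add h0 bound2
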